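/- Let θ ∈ Ω¹(P) ⊗ 𝔤 be a connection on a principal G-bundle P over a Lie groupoid Γ ⇉ Γ₀, and let φ : Γ₀' ← Z → Γ₀ be a generalized homomorphism from Γ' ⇉ Γ₀' to Γ ⇉ Γ₀, with pull-back bundle P' = (Z ×_{Γ₀} P)/Γ over Γ'. Then: (1) there is a unique θ' ∈ Ω¹(P') ⊗ 𝔤 with τ̃*θ' = σ̃*θ, where τ̃ : Z ×_{Γ₀} P → P' is the quotient projection and σ̃ : Z ×_{Γ₀} P → P the second projection; (2) θ' is a connection on P' over Γ' (the pull-back connection φ*θ); (3) the curvatures satisfy τ̃*Ω' = σ̃*Ω; (4) φ*θ is flat whenever θ is flat; (5) for composable generalized homomorphisms ψ, φ, one has (φ ∘ ψ)*θ = ψ*(φ*θ). -/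

import Mathlib

/-!
Shared abstract framework for "Chern-Weil map for principal bundles over groupoids"
(Laurent-Gengoux, Tu, Xu).  Smooth structures are abstracted away: a Lie groupoid is
modelled by its underlying (set-level) groupoid, and the de Rham functor is modelled
by an abstract contravariant functor of graded-commutative differential algebras.
-/

open scoped TensorProduct

noncomputable section

/-- A (Lie) groupoid `Γ ⇉ Γ₀`; `s` is the source (`β`), `t` is the target (`α`). -/
structure Gpd where
  O : Type
  M : Type
  s : M → O
  t : M → O
  comp : ∀ g h : M, s g = t h → M
  unit : O → M
  inv : M → M
  s_comp : ∀ g h hc, s (comp g h hc) = s h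
  t_comp : ∀ g h hc, t (comp g h hc) = t g
  s_unit : ∀ x, s (unit x) = x
  t_unit : ∀ x, t (unit x) = x
  s_inv : ∀ g, s (inv g) = t g
  t_inv : ∀ g, t (inv g) = s g
  comp_assoc : ∀ g h k (hgh : s g = t h) (hhk : s h = t k),
    comp (comp g h hgh) k ((s_comp g h hgh).trans hhk) =
      comp g (comp h k hhk) (hgh.trans (t_comp h k hhk).symm)
  unit_comp : ∀ g, comp (unit (t g)) g (s_unit (t g)) = g
  comp_unit : ∀ g, comp g (unit (s g)) (t_unit (s g)).symm = g
  inv_comp : ∀ g, comp (inv g) g (s_inv g) = unit (s g)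
  comp_inv : ∀ g, comp g (inv g) (t_inv g).symm = unit (t g)

/-- A principal `G`-bundle datum `P → B` (right `G`-action covering `proj`). -/
structure PrinBundle (G : Type) [Group G] (P B : Type) where
  proj : P → B
  act : P → G → P
  act_one : ∀ p, act p 1 = p
  act_mul : ∀ p g h, act (act p g) h = act p (g * h)
  proj_act : ∀ p g, proj (act p g) = proj p

/-- Principality: `proj` is onto and `G` acts freely and transitively on fibres. -/
def PrinBundle.IsPrincipal {G P B : Type} [Group G] (Bd : PrinBundle G P B) : Prop :=
  Function.Surjective Bd.proj ∧ ∀ p q, Bd.proj p = Bd.proj q → ∃! g, Bd.act p g = q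

/-- A principal `G`-bundle over the groupoid `Γ ⇉ Γ₀`: a principal `G`-bundle
`P → Γ₀` together with a left `Γ`-action commuting with the `G`-action. -/
structure GpdBundle (G : Type) [Group G] (Γ : Gpd) (P : Type)
    extends PrinBundle G P Γ.O where
  gact : ∀ (γ : Γ.M) (p : P), Γ.s γ = proj p → P
  gact_proj : ∀ γ p h, proj (gact γ p h) = Γ.t γ
  gact_unit : ∀ p, gact (Γ.unit (proj p)) p (Γ.s_unit _) = p
  gact_comp : ∀ γ₁ γ₂ p (h₁ : Γ.s γ₁ = Γ.t γ₂) (h₂ : Γ.s γ₂ = proj p),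
    gact γ₁ (gact γ₂ p h₂) (h₁.trans (gact_proj γ₂ p h₂).symm)
      = gact (Γ.comp γ₁ γ₂ h₁) p ((Γ.s_comp γ₁ γ₂ h₁).trans h₂)
  gact_act : ∀ γ p g (h : Γ.s γ = proj p),
    gact γ (act p g) (h.trans (proj_act p g).symm) = act (gact γ p h) g

/-- Carrier of an abstract "differential forms" functor. -/
structure FormsCarrier where
  Ω : Type → Type
  ringΩ : ∀ X, Ring (Ω X)

attribute [instance] FormsCarrier.ringΩ

structure FormsCarrier₂ extends FormsCarrier where
  algΩ : ∀ X, Algebra ℝ (Ω X)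

attribute [instance] FormsCarrier₂.algΩ

/-- An abstract de Rham functor: to each space `X` a graded-commutative differential
`ℝ`-algebra `Ω X`, contravariantly functorial in `X`. -/
structure FormsTheory extends FormsCarrier₂ where
  d : ∀ X : Type, Ω X →ₗ[ℝ] Ω X
  pull : ∀ {X Y : Type}, (X → Y) → (Ω Y →ₐ[ℝ] Ω X)
  gr : ∀ X : Type, ℕ → Submodule ℝ (Ω X)
  d_d : ∀ (X : Type) ω, d X (d X ω) = 0
  d_one : ∀ X : Type, d X 1 = 0
  pull_id : ∀ (X : Type) ω, pull (id : X → X) ω = ω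
  pull_comp : ∀ {X Y Z : Type} (f : X → Y) (g : Y → Z) ω,
    pull (g ∘ f) ω = pull f (pull g ω)
  pull_d : ∀ {X Y : Type} (f : X → Y) ω, pull f (d Y ω) = d X (pull f ω)
  d_gr : ∀ (X : Type) k ω, ω ∈ gr X k → d X ω ∈ gr X (k + 1)
  mul_gr : ∀ (X : Type) k l a b, a ∈ gr X k → b ∈ gr X l → a * b ∈ gr X (k + l)
  pull_gr : ∀ {X Y : Type} (f : X → Y) k ω, ω ∈ gr Y k → pull f ω ∈ gr X k
  one_gr : ∀ X : Type, (1 : Ω X) ∈ gr X 0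
  comm_gr : ∀ (X : Type) k l a b, a ∈ gr X k → b ∈ gr X l →
    a * b = ((-1 : ℝ) ^ (k * l)) • (b * a)

/-- Degree-`k` part of the `𝔤`-valued forms `Ω X ⊗ 𝔤`. -/
def grT (F : FormsTheory) (X : Type) (𝔤 : Type) [AddCommGroup 𝔤] [Module ℝ 𝔤] (k : ℕ) :
    Submodule ℝ (F.Ω X ⊗[ℝ] 𝔤) :=
  LinearMap.range (TensorProduct.map (F.gr X k).subtype (LinearMap.id (M := 𝔤)))

/-- Pull-back of `𝔤`-valued forms. -/
def pullT (F : FormsTheory) {X Y : Type} (f : X → Y)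
    (𝔤 : Type) [AddCommGroup 𝔤] [Module ℝ 𝔤] :
    F.Ω Y ⊗[ℝ] 𝔤 →ₗ[ℝ] F.Ω X ⊗[ℝ] 𝔤 :=
  LinearMap.rTensor 𝔤 (F.pull f).toLinearMap

/-- The bracket `[ω₁ ⊗ X₁, ω₂ ⊗ X₂] = (ω₁ ∧ ω₂) ⊗ [X₁, X₂]` on `A ⊗ 𝔤`. -/
def brT (A : Type) [Ring A] [Algebra ℝ A] (𝔤 : Type) [LieRing 𝔤] [LieAlgebra ℝ 𝔤] :
    A ⊗[ℝ] 𝔤 →ₗ[ℝ] A ⊗[ℝ] 𝔤 →ₗ[ℝ] A ⊗[ℝ] 𝔤 :=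
  TensorProduct.curry
    ((TensorProduct.map (LinearMap.mul' ℝ A)
        (TensorProduct.lift ((LieAlgebra.ad ℝ 𝔤 : 𝔤 →ₗ[ℝ] Module.End ℝ 𝔤)))).comp
      (TensorProduct.tensorTensorTensorComm ℝ A 𝔤 A 𝔤).toLinearMap)

/-- Contraction operators `i_X` by the fundamental vector fields of the `G`-action
(the `G`-differential algebra structure on `Ω P`). -/
structure ContractionData (F : FormsTheory) (𝔤 : Type) [AddCommGroup 𝔤] [Module ℝ 𝔤]
    (P : Type) where
  i : 𝔤 → (F.Ω P →ₗ[ℝ] F.Ω P)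
  i_anticomm : ∀ X Y ω, i X (i Y ω) + i Y (i X ω) = 0

/-- A pseudo-connection: a connection 1-form `θ ∈ Ω¹(P) ⊗ 𝔤` for the `G`-bundle
`P → Γ₀`, forgetting the `Γ`-action: `θ` has degree 1, `i_X θ = 1 ⊗ X`, and `θ` is
`G`-equivariant (`R_g^* θ = Ad_{g⁻¹} θ`). -/
def IsPseudoConn (G : Type) [Group G] (𝔤 : Type) [LieRing 𝔤] [LieAlgebra ℝ 𝔤]
    (Ad : G →* Module.End ℝ 𝔤) {Γ : Gpd} {P : Type}
    (F : FormsTheory) (B : GpdBundle G Γ P) (cd : ContractionData F 𝔤 P)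
    (θ : F.Ω P ⊗[ℝ] 𝔤) : Prop :=
  θ ∈ grT F P 𝔤 1 ∧
  (∀ X : 𝔤, LinearMap.rTensor 𝔤 (cd.i X) θ = (1 : F.Ω P) ⊗ₜ[ℝ] X) ∧
  (∀ g : G, pullT F (fun p => B.act p g) 𝔤 θ = LinearMap.lTensor (F.Ω P) (Ad g⁻¹) θ)

/-- Space of the transformation groupoid `Q = Γ ×_{Γ₀} P ⇉ P`. -/
def QSp {G : Type} [Group G] {Γ : Gpd} {P : Type} (B : GpdBundle G Γ P) : Type :=
  {x : Γ.M × P // Γ.s x.1 = B.proj x.2}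

/-- Source map `β(γ, p) = p` of the transformation groupoid. -/
def Qbeta {G : Type} [Group G] {Γ : Gpd} {P : Type} (B : GpdBundle G Γ P) :
    QSp B → P := fun x => x.1.2

/-- Target map `α(γ, p) = γ · p` of the transformation groupoid. -/
def Qalpha {G : Type} [Group G] {Γ : Gpd} {P : Type} (B : GpdBundle G Γ P) :
    QSp B → P := fun x => B.gact x.1.1 x.1.2 x.2

/-- The simplicial differential `∂ = β^* - α^*` (with respect to the transformation
groupoid `Q ⇉ P`), on `𝔤`-valued forms. -/
def partialT {G : Type} [Group G] {Γ : Gpd} {P : Type}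
    (F : FormsTheory) (𝔤 : Type) [AddCommGroup 𝔤] [Module ℝ 𝔤] (B : GpdBundle G Γ P) :
    F.Ω P ⊗[ℝ] 𝔤 →ₗ[ℝ] F.Ω (QSp B) ⊗[ℝ] 𝔤 :=
  pullT F (Qbeta B) 𝔤 - pullT F (Qalpha B) 𝔤

/-- The curvature `Ω = dθ + ½ [θ, θ]` of a pseudo-connection. -/
def curv (F : FormsTheory) {P : Type} (𝔤 : Type) [LieRing 𝔤] [LieAlgebra ℝ 𝔤]
    (θ : F.Ω P ⊗[ℝ] 𝔤) : F.Ω P ⊗[ℝ] 𝔤 :=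
  LinearMap.rTensor 𝔤 (F.d P) θ + (1 / 2 : ℝ) • (brT (F.Ω P) 𝔤 θ θ)

/-- Pairs of composable arrows: level 2 of the nerve of `Γ`. -/
def N2 (Γ : Gpd) : Type := {x : Γ.M × Γ.M // Γ.s x.1 = Γ.t x.2}

def n2e0 (Γ : Gpd) : N2 Γ → Γ.M := fun x => x.1.2
def n2e1 (Γ : Gpd) : N2 Γ → Γ.M := fun x => Γ.comp x.1.1 x.1.2 x.2
def n2e2 (Γ : Gpd) : N2 Γ → Γ.M := fun x => x.1.1

/-- The total de Rham complex `(Ω(Γ_•), δ = (-1)^p d + ∂, ∨)` of the nerve of a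
groupoid with objects `X0`, arrows `X1` (source `β`, target `α`) and composable
pairs `X2` (face maps `e0, e1, e2`), hypothesised abstractly: an `ℝ`-algebra `T`
under the cup product, with total differential `δ` and with the inclusions of the
low columns satisfying the defining relations of the double complex. -/
structure NerveDR (F : FormsTheory) (X0 X1 X2 : Type)
    (β α : X1 → X0) (e0 e1 e2 : X2 → X1) where
  T : Type
  ringT : Ring T
  algT : Algebra ℝ T
  δ : T →ₗ[ℝ] T
  δ_δ : ∀ a, δ (δ a) = 0
  δ_one : δ 1 = 0
  δ_mul_closed : ∀ a b, δ a = 0 → δ b = 0 → δ (a * b) = 0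
  ι0 : F.Ω X0 →ₗ[ℝ] T
  ι1 : F.Ω X1 →ₗ[ℝ] T
  ι2 : F.Ω X2 →ₗ[ℝ] T
  ι0_injective : Function.Injective ι0
  ι0_one : ι0 1 = 1
  ι0_mul : ∀ a b, ι0 a * ι0 b = ι0 (a * b)
  δ_ι0 : ∀ ω, δ (ι0 ω) = ι0 (F.d X0 ω) + ι1 (F.pull β ω - F.pull α ω)
  δ_ι1 : ∀ ω, δ (ι1 ω) = - ι1 (F.d X1 ω) +
    ι2 (F.pull e0 ω - F.pull e1 ω + F.pull e2 ω)
  cup01 : ∀ (k : ℕ) (a : F.Ω X0) (b : F.Ω X1), a ∈ F.gr X0 k →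
    ι0 a * ι1 b = ((-1 : ℝ) ^ k) • ι1 (F.pull α a * b)
  cup10 : ∀ (a : F.Ω X1) (b : F.Ω X0), ι1 a * ι0 b = ι1 (a * F.pull β b)

attribute [instance] NerveDR.ringT NerveDR.algT

/-- The de Rham double complex of the nerve `Γ_•` of a groupoid `Γ`. -/
abbrev GpdDR (F : FormsTheory) (Γ : Gpd) :=
  NerveDR F Γ.O Γ.M (N2 Γ) Γ.s Γ.t (n2e0 Γ) (n2e1 Γ) (n2e2 Γ)

/-- Closed forms `Z^*` of the total complex, as a subalgebra. -/
def ZSub {F : FormsTheory} {X0 X1 X2 : Type} {β α : X1 → X0} {e0 e1 e2 : X2 → X1}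
    (D : NerveDR F X0 X1 X2 β α e0 e1 e2) : Subalgebra ℝ D.T where
  carrier := {a | D.δ a = 0}
  mul_mem' := fun ha hb => D.δ_mul_closed _ _ ha hb
  one_mem' := D.δ_one
  add_mem' := fun {a b} ha hb => by
    have ha' : D.δ a = 0 := ha
    have hb' : D.δ b = 0 := hb
    show D.δ (a + b) = 0
    rw [map_add, ha', hb', add_zero]
  zero_mem' := by simp
  algebraMap_mem' := fun r => by
    show D.δ _ = 0
    rw [Algebra.algebraMap_eq_smul_one, map_smul, D.δ_one, smul_zero]

theorem mem_ZSub {F : FormsTheory} {X0 X1 X2 : Type} {β α : X1 → X0}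
    {e0 e1 e2 : X2 → X1} {D : NerveDR F X0 X1 X2 β α e0 e1 e2} {a : D.T} :
    a ∈ ZSub D ↔ D.δ a = 0 := Iff.rfl

/-- Two closed forms are identified in cohomology iff they differ by a coboundary. -/
def exRel {F : FormsTheory} {X0 X1 X2 : Type} {β α : X1 → X0} {e0 e1 e2 : X2 → X1}
    (D : NerveDR F X0 X1 X2 β α e0 e1 e2) : ↥(ZSub D) → ↥(ZSub D) → Prop :=
  fun a b => ∃ c : D.T, (a : D.T) - b = D.δ c

/-- The de Rham cohomology ring `H^*` of the total complex. -/
def Hcoh {F : FormsTheory} {X0 X1 X2 : Type} {β α : X1 → X0} {e0 e1 e2 : X2 → X1}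
    (D : NerveDR F X0 X1 X2 β α e0 e1 e2) : Type :=
  RingQuot (exRel D)

instance {F : FormsTheory} {X0 X1 X2 : Type} {β α : X1 → X0} {e0 e1 e2 : X2 → X1}
    (D : NerveDR F X0 X1 X2 β α e0 e1 e2) : Ring (Hcoh D) := by
  unfold Hcoh; infer_instance

instance {F : FormsTheory} {X0 X1 X2 : Type} {β α : X1 → X0} {e0 e1 e2 : X2 → X1}
    (D : NerveDR F X0 X1 X2 β α e0 e1 e2) : Algebra ℝ (Hcoh D) := by
  unfold Hcoh; infer_instance

/-- Projection from closed forms onto cohomology classes. -/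
def toH {F : FormsTheory} {X0 X1 X2 : Type} {β α : X1 → X0} {e0 e1 e2 : X2 → X1}
    (D : NerveDR F X0 X1 X2 β α e0 e1 e2) : ↥(ZSub D) →ₐ[ℝ] Hcoh D :=
  RingQuot.mkAlgHom ℝ (exRel D)

/-- Polynomial functions on `𝔤`: the subalgebra of `𝔤 → ℝ` generated by the linear
functionals (i.e. `S(𝔤^*)` realised as functions). -/
def polySub (𝔤 : Type) [AddCommGroup 𝔤] [Module ℝ 𝔤] : Subalgebra ℝ (𝔤 → ℝ) :=
  Algebra.adjoin ℝ {f : 𝔤 → ℝ | ∃ l : 𝔤 →ₗ[ℝ] ℝ, f = ⇑l}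

/-- `Ad`-invariant functions on `𝔤`. -/
def invSub (G : Type) [Group G] (𝔤 : Type) [AddCommGroup 𝔤] [Module ℝ 𝔤]
    (Ad : G →* Module.End ℝ 𝔤) : Subalgebra ℝ (𝔤 → ℝ) where
  carrier := {f | ∀ (g : G) (x : 𝔤), f (Ad g x) = f x}
  mul_mem' := fun hf hg g x => by simp only [Pi.mul_apply, hf g x, hg g x]
  one_mem' := fun g x => rfl
  add_mem' := fun hf hg g x => by simp only [Pi.add_apply, hf g x, hg g x]
  zero_mem' := fun g x => rfl
  algebraMap_mem' := fun r g x => rfl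

/-- The algebra `S(𝔤^*)^G` of `G`-invariant polynomials on `𝔤`. -/
def invPoly (G : Type) [Group G] (𝔤 : Type) [AddCommGroup 𝔤] [Module ℝ 𝔤]
    (Ad : G →* Module.End ℝ 𝔤) : Subalgebra ℝ (𝔤 → ℝ) :=
  polySub 𝔤 ⊓ invSub G 𝔤 Ad

/-- A Chern-Weil system for a principal `G`-bundle over a groupoid: for every
pseudo-connection `θ` a cochain-level map `z_θ : S(𝔤^*)^G → Z^*(Γ_•)` with values in
closed forms, all inducing one and the same algebra homomorphism
`w : S(𝔤^*)^G → H^*(Γ_•)` on cohomology (independence of the pseudo-connection). -/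
structure CWSystem (G : Type) [Group G] (𝔤 : Type) [LieRing 𝔤] [LieAlgebra ℝ 𝔤]
    (Ad : G →* Module.End ℝ 𝔤) {Γ : Gpd} {P : Type}
    (F : FormsTheory) (B : GpdBundle G Γ P) (cd : ContractionData F 𝔤 P)
    (D : GpdDR F Γ) where
  z : ∀ θ : F.Ω P ⊗[ℝ] 𝔤, IsPseudoConn G 𝔤 Ad F B cd θ →
    (↥(invPoly G 𝔤 Ad) → ↥(ZSub D))
  w : ↥(invPoly G 𝔤 Ad) →ₐ[ℝ] Hcoh D
  z_w : ∀ θ hθ f, toH D (z θ hθ f) = w f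

end

noncomputable section

/-- A generalized homomorphism `Γ₀' ←τ Z →σ Γ₀` from `Γ'` to `Γ`. -/
structure GenHom (Γ' Γ : Gpd) where
  Z : Type
  τ : Z → Γ'.O
  σ : Z → Γ.O
  lact : ∀ (γ : Γ'.M) (z : Z), Γ'.s γ = τ z → Z
  ract : ∀ (z : Z) (δ : Γ.M), σ z = Γ.t δ → Z
  τ_lact : ∀ γ z h, τ (lact γ z h) = Γ'.t γ
  σ_lact : ∀ γ z h, σ (lact γ z h) = σ z
  τ_ract : ∀ z δ h, τ (ract z δ h) = τ z
  σ_ract : ∀ z δ h, σ (ract z δ h) = Γ.s δ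
  lact_unit : ∀ z, lact (Γ'.unit (τ z)) z (Γ'.s_unit _) = z
  lact_comp : ∀ γ₁ γ₂ z (h₁ : Γ'.s γ₁ = Γ'.t γ₂) (h₂ : Γ'.s γ₂ = τ z),
    lact γ₁ (lact γ₂ z h₂) (h₁.trans (τ_lact γ₂ z h₂).symm)
      = lact (Γ'.comp γ₁ γ₂ h₁) z ((Γ'.s_comp _ _ _).trans h₂)
  ract_unit : ∀ z, ract z (Γ.unit (σ z)) (Γ.t_unit _).symm = z
  ract_comp : ∀ z δ₁ δ₂ (h₁ : σ z = Γ.t δ₁) (h₂ : Γ.s δ₁ = Γ.t δ₂),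
    ract (ract z δ₁ h₁) δ₂ ((σ_ract z δ₁ h₁).trans h₂)
      = ract z (Γ.comp δ₁ δ₂ h₂) (h₁.trans (Γ.t_comp _ _ _).symm)
  act_comm : ∀ γ z δ (hγ : Γ'.s γ = τ z) (hδ : σ z = Γ.t δ),
    ract (lact γ z hγ) δ ((σ_lact γ z hγ).trans hδ)
      = lact γ (ract z δ hδ) (hγ.trans (τ_ract z δ hδ).symm)
  τ_surj : Function.Surjective τ
  principal : ∀ z z', τ z = τ z' → ∃ (δ : Γ.M) (h : σ z = Γ.t δ),
    ract z δ h = z' ∧ ∀ (δ₂ : Γ.M) (h₂ : σ z = Γ.t δ₂), ract z δ₂ h₂ = z' → δ₂ = δ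

/-- The fibred product `Z ×_{Γ₀} P`. -/
def PBW {G : Type} [Group G] {Γ' Γ : Gpd} (φ : GenHom Γ' Γ) {P : Type}
    (B : GpdBundle G Γ P) : Type :=
  {x : φ.Z × P // φ.σ x.1 = B.proj x.2}

/-- The projection `σ̃ : Z ×_{Γ₀} P → P`. -/
def pbσ {G : Type} [Group G] {Γ' Γ : Gpd} (φ : GenHom Γ' Γ) {P : Type}
    (B : GpdBundle G Γ P) : PBW φ B → P := fun w => w.1.2

/-- The diagonal `Γ`-orbit relation on `Z ×_{Γ₀} P`, whose quotient is the
pull-back bundle `P' = (Z ×_{Γ₀} P)/Γ`. -/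
def pbRel {G : Type} [Group G] {Γ' Γ : Gpd} (φ : GenHom Γ' Γ) {P : Type}
    (B : GpdBundle G Γ P) : PBW φ B → PBW φ B → Prop :=
  fun a b => ∃ (γ : Γ.M) (h : φ.σ a.1.1 = Γ.t γ) (hp : Γ.s γ = B.proj b.1.2),
    b.1.1 = φ.ract a.1.1 γ h ∧ a.1.2 = B.gact γ b.1.2 hp

/-- `(P', q, B')` realises the pull-back principal `G`-bundle
`φ^* P = (Z ×_{Γ₀} P)/Γ` over `Γ' ⇉ Γ₀'`, with its canonical `G`- and
`Γ'`-actions (`τ̃ = q` being the quotient map). -/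
structure PullbackReal {G : Type} [Group G] {Γ' Γ : Gpd} (φ : GenHom Γ' Γ)
    {P : Type} (B : GpdBundle G Γ P)
    (P' : Type) (q : PBW φ B → P') (B' : GpdBundle G Γ' P') : Prop where
  surj : Function.Surjective q
  eq_iff : ∀ a b : PBW φ B, q a = q b ↔ Relation.EqvGen (pbRel φ B) a b
  proj_eq : ∀ w, B'.proj (q w) = φ.τ w.1.1
  act_eq : ∀ w g, B'.act (q w) g =
    q ⟨(w.1.1, B.act w.1.2 g), w.2.trans (B.proj_act w.1.2 g).symm⟩
  gact_eq : ∀ γ' w (h : Γ'.s γ' = B'.proj (q w)) (h' : Γ'.s γ' = φ.τ w.1.1),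
    B'.gact γ' (q w) h =
      q ⟨(φ.lact γ' w.1.1 h', w.1.2), (φ.σ_lact γ' w.1.1 h').trans w.2⟩

/-- The fibred product `Z'' ×_{Γ₀'} Z` underlying the composition of two
generalized homomorphisms. -/
def CompW {Γ'' Γ' Γ : Gpd} (ψ : GenHom Γ'' Γ') (φ : GenHom Γ' Γ) : Type :=
  {x : ψ.Z × φ.Z // ψ.σ x.1 = φ.τ x.2}

/-- `(χ, mk)` realises the composition `φ ∘ ψ` of the generalized homomorphisms
`ψ` and `φ` (i.e. `χ.Z = (Z'' ×_{Γ₀'} Z)/Γ'` with `mk` the quotient map). -/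
structure CompReal {Γ'' Γ' Γ : Gpd} (ψ : GenHom Γ'' Γ') (φ : GenHom Γ' Γ)
    (χ : GenHom Γ'' Γ) (mk : CompW ψ φ → χ.Z) : Prop where
  surj : Function.Surjective mk
  τ_eq : ∀ x, χ.τ (mk x) = ψ.τ x.1.1
  σ_eq : ∀ x, χ.σ (mk x) = φ.σ x.1.2

section PullbackHelpers

variable (F : FormsTheory) (𝔤 : Type) [AddCommGroup 𝔤] [Module ℝ 𝔤]

theorem pullT_comp {X Y Z : Type} (f : X → Y) (g : Y → Z) (ω : F.Ω Z ⊗[ℝ] 𝔤) :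
    pullT F (g ∘ f) 𝔤 ω = pullT F f 𝔤 (pullT F g 𝔤 ω) := by
  have h : (F.pull (g ∘ f)).toLinearMap
      = (F.pull f).toLinearMap ∘ₗ (F.pull g).toLinearMap :=
    LinearMap.ext fun a => F.pull_comp f g a
  unfold pullT
  rw [h, LinearMap.rTensor_comp, LinearMap.comp_apply]

theorem pullT_id {X : Type} (ω : F.Ω X ⊗[ℝ] 𝔤) : pullT F (id : X → X) 𝔤 ω = ω := by
  have h : (F.pull (id : X → X)).toLinearMap = LinearMap.id :=
    LinearMap.ext fun a => F.pull_id X a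
  unfold pullT
  rw [h, LinearMap.rTensor_id, LinearMap.id_apply]

theorem pullT_inj {X Y : Type} (u : X → Y) (hu : Function.Surjective u) :
    Function.Injective (pullT F u 𝔤) := by
  classical
  have key : ∀ c, pullT F (Function.surjInv hu) 𝔤 (pullT F u 𝔤 c) = c := by
    intro c
    rw [← pullT_comp]
    have h : u ∘ Function.surjInv hu = id := funext fun y => Function.surjInv_eq hu y
    rw [h, pullT_id]
  intro a b hab
  rw [← key a, hab, key b]

theorem pullT_congr {X Y : Type} {f g : X → Y} (h : ∀ x, f x = g x) (ω : F.Ω Y ⊗[ℝ] 𝔤) :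
    pullT F f 𝔤 ω = pullT F g 𝔤 ω := by rw [funext h]

theorem pullT_rTensor_comm {X Y : Type} (f : X → Y) (gY : F.Ω Y →ₗ[ℝ] F.Ω Y)
    (gX : F.Ω X →ₗ[ℝ] F.Ω X) (hc : ∀ ω, F.pull f (gY ω) = gX (F.pull f ω))
    (t : F.Ω Y ⊗[ℝ] 𝔤) :
    pullT F f 𝔤 (LinearMap.rTensor 𝔤 gY t) = LinearMap.rTensor 𝔤 gX (pullT F f 𝔤 t) := by
  have h : (F.pull f).toLinearMap ∘ₗ gY = gX ∘ₗ (F.pull f).toLinearMap :=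
    LinearMap.ext hc
  have h2 := congrArg (LinearMap.rTensor 𝔤) h
  rw [LinearMap.rTensor_comp, LinearMap.rTensor_comp] at h2
  exact LinearMap.congr_fun h2 t

theorem pullT_lTensor {X Y : Type} (f : X → Y) (A : 𝔤 →ₗ[ℝ] 𝔤) (t : F.Ω Y ⊗[ℝ] 𝔤) :
    pullT F f 𝔤 (LinearMap.lTensor (F.Ω Y) A t)
      = LinearMap.lTensor (F.Ω X) A (pullT F f 𝔤 t) := by
  unfold pullT
  rw [← LinearMap.comp_apply, ← LinearMap.comp_apply,
    LinearMap.rTensor_comp_lTensor, LinearMap.lTensor_comp_rTensor]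

theorem pullT_one_tmul {X Y : Type} (f : X → Y) (v : 𝔤) :
    pullT F f 𝔤 ((1 : F.Ω Y) ⊗ₜ[ℝ] v) = (1 : F.Ω X) ⊗ₜ[ℝ] v := by
  unfold pullT
  rw [LinearMap.rTensor_tmul]
  simp

theorem pullT_grT {X Y : Type} (f : X → Y) (k : ℕ) {ω : F.Ω Y ⊗[ℝ] 𝔤}
    (hω : ω ∈ grT F Y 𝔤 k) : pullT F f 𝔤 ω ∈ grT F X 𝔤 k := by
  obtain ⟨u, hu⟩ := hω
  subst hu
  refine ⟨TensorProduct.map (LinearMap.codRestrict (F.gr X k)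
    ((F.pull f).toLinearMap ∘ₗ (F.gr Y k).subtype)
    (fun c => F.pull_gr f k c c.2)) LinearMap.id u, ?_⟩
  induction u using TensorProduct.induction_on with
  | zero => simp
  | tmul a x =>
    simp [pullT, TensorProduct.map_tmul, LinearMap.rTensor_tmul]
    rfl
  | add a b ha hb => simp only [map_add, ha, hb]

theorem brT_tmul (A : Type) [Ring A] [Algebra ℝ A] (𝔥 : Type) [LieRing 𝔥] [LieAlgebra ℝ 𝔥]
    (a b : A) (x y : 𝔥) :
    brT A 𝔥 (a ⊗ₜ[ℝ] x) (b ⊗ₜ[ℝ] y) = (a * b) ⊗ₜ[ℝ] ⁅x, y⁆ := by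
  simp [brT, TensorProduct.curry_apply, TensorProduct.tensorTensorTensorComm_tmul,
    LinearMap.mul'_apply, TensorProduct.map_tmul, TensorProduct.lift.tmul]

theorem pullT_brT (F : FormsTheory) (𝔥 : Type) [LieRing 𝔥] [LieAlgebra ℝ 𝔥]
    {X Y : Type} (f : X → Y) (a b : F.Ω Y ⊗[ℝ] 𝔥) :
    pullT F f 𝔥 (brT (F.Ω Y) 𝔥 a b) = brT (F.Ω X) 𝔥 (pullT F f 𝔥 a) (pullT F f 𝔥 b) := by
  induction a using TensorProduct.induction_on with
  | zero => simp
  | add a₁ a₂ h₁ h₂ => simp only [map_add, LinearMap.add_apply, h₁, h₂]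
  | tmul ω x =>
    induction b using TensorProduct.induction_on with
    | zero => simp
    | add b₁ b₂ g₁ g₂ => simp only [map_add, g₁, g₂]
    | tmul ω' y =>
      rw [brT_tmul]
      unfold pullT
      simp only [LinearMap.rTensor_tmul, AlgHom.toLinearMap_apply, map_mul]
      rw [brT_tmul]

theorem pullT_curv (F : FormsTheory) (𝔥 : Type) [LieRing 𝔥] [LieAlgebra ℝ 𝔥]
    {X Y : Type} (f : X → Y) (θ : F.Ω Y ⊗[ℝ] 𝔥) :
    pullT F f 𝔥 (curv F 𝔥 θ) = curv F 𝔥 (pullT F f 𝔥 θ) := by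
  unfold curv
  rw [map_add, map_smul, pullT_brT,
    pullT_rTensor_comm F 𝔥 f (F.d Y) (F.d X) (fun ω => F.pull_d f ω)]

theorem gact_congr {G : Type} [Group G] {Γ : Gpd} {P : Type} (B : GpdBundle G Γ P)
    {γ₁ γ₂ : Γ.M} {p₁ p₂ : P} (hγ : γ₁ = γ₂) (hp : p₁ = p₂)
    (h₁ : Γ.s γ₁ = B.proj p₁) (h₂ : Γ.s γ₂ = B.proj p₂) :
    B.gact γ₁ p₁ h₁ = B.gact γ₂ p₂ h₂ := by subst hγ; subst hp; rfl

/-- The `Γ`-orbit relation on `P`. -/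
def orbRel {G : Type} [Group G] {Γ : Gpd} {P : Type} (B : GpdBundle G Γ P)
    (p p' : P) : Prop :=
  ∃ (γ : Γ.M) (h : Γ.s γ = B.proj p'), p = B.gact γ p' h

theorem orbRel_refl {G : Type} [Group G] {Γ : Gpd} {P : Type} (B : GpdBundle G Γ P)
    (p : P) : orbRel B p p :=
  ⟨Γ.unit (B.proj p), Γ.s_unit _, (B.gact_unit p).symm⟩

theorem orbRel_symm {G : Type} [Group G] {Γ : Gpd} {P : Type} (B : GpdBundle G Γ P)
    {p p' : P} (h : orbRel B p p') : orbRel B p' p := by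
  obtain ⟨γ, hγ, he⟩ := h
  subst he
  refine ⟨Γ.inv γ, by rw [Γ.s_inv, B.gact_proj], ?_⟩
  have e1 := B.gact_comp (Γ.inv γ) γ p' (Γ.s_inv γ) hγ
  have e2 : B.gact (Γ.comp (Γ.inv γ) γ (Γ.s_inv γ)) p' ((Γ.s_comp _ _ _).trans hγ)
      = B.gact (Γ.unit (B.proj p')) p' (Γ.s_unit _) :=
    gact_congr B (by rw [Γ.inv_comp, hγ]) rfl _ _
  exact (e1.trans (e2.trans (B.gact_unit p'))).symm

theorem orbRel_trans {G : Type} [Group G] {Γ : Gpd} {P : Type} (B : GpdBundle G Γ P)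
    {p p' p'' : P} (h : orbRel B p p') (h' : orbRel B p' p'') : orbRel B p p'' := by
  obtain ⟨γ₁, h₁, e₁⟩ := h
  obtain ⟨γ₂, h₂, e₂⟩ := h'
  subst e₁
  subst e₂
  have hc : Γ.s γ₁ = Γ.t γ₂ := h₁.trans (B.gact_proj _ _ _)
  exact ⟨Γ.comp γ₁ γ₂ hc, (Γ.s_comp _ _ _).trans h₂, B.gact_comp γ₁ γ₂ p'' hc h₂⟩

theorem eqvGen_orbRel {G : Type} [Group G] {Γ' Γ : Gpd} (φ : GenHom Γ' Γ) {P : Type}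
    (B : GpdBundle G Γ P) {a b : PBW φ B} (h : Relation.EqvGen (pbRel φ B) a b) :
    orbRel B (pbσ φ B a) (pbσ φ B b) := by
  induction h with
  | rel x y hxy =>
    obtain ⟨γ, hσ, hp, _, h2⟩ := hxy
    exact ⟨γ, hp, h2⟩
  | refl x => exact orbRel_refl B _
  | symm x y _ ih => exact orbRel_symm B ih
  | trans x y z _ _ ih₁ ih₂ => exact orbRel_trans B ih₁ ih₂

end PullbackHelpers

/-- Arrows of the transformation groupoid of `Γ'` acting on `Z ×_{Γ₀} P`. -/
def W2T {G : Type} [Group G] {Γ' Γ : Gpd} (φ : GenHom Γ' Γ) {P : Type}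
    (B : GpdBundle G Γ P) : Type :=
  {x : Γ'.M × PBW φ B // Γ'.s x.1 = φ.τ x.2.1.1}

def W2pr {G : Type} [Group G] {Γ' Γ : Gpd} (φ : GenHom Γ' Γ) {P : Type}
    (B : GpdBundle G Γ P) : W2T φ B → PBW φ B := fun x => x.1.2

def W2L {G : Type} [Group G] {Γ' Γ : Gpd} (φ : GenHom Γ' Γ) {P : Type}
    (B : GpdBundle G Γ P) : W2T φ B → PBW φ B := fun x =>
  ⟨(φ.lact x.1.1 x.1.2.1.1 x.2, x.1.2.1.2), (φ.σ_lact _ _ _).trans x.1.2.2⟩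

def W2Qt {G : Type} [Group G] {Γ' Γ : Gpd} (φ : GenHom Γ' Γ) {P P' : Type}
    (B : GpdBundle G Γ P) (B' : GpdBundle G Γ' P') (q : PBW φ B → P')
    (hpe : ∀ w, B'.proj (q w) = φ.τ w.1.1) : W2T φ B → QSp B' := fun x =>
  ⟨(x.1.1, q x.1.2), x.2.trans (hpe x.1.2).symm⟩

theorem W2Qt_surj {G : Type} [Group G] {Γ' Γ : Gpd} (φ : GenHom Γ' Γ) {P P' : Type}
    (B : GpdBundle G Γ P) (B' : GpdBundle G Γ' P') (q : PBW φ B → P')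
    (hpe : ∀ w, B'.proj (q w) = φ.τ w.1.1) (hq : Function.Surjective q) :
    Function.Surjective (W2Qt φ B B' q hpe) := by
  rintro ⟨⟨γ', p'⟩, hx⟩
  obtain ⟨w, hw⟩ := hq p'
  refine ⟨⟨(γ', w), ?_⟩, ?_⟩
  · rw [← hpe w, hw]; exact hx
  · apply Subtype.ext
    show (γ', q w) = (γ', p')
    rw [hw]

theorem partial_pullback {G : Type} [Group G] {Γ' Γ : Gpd} (φ : GenHom Γ' Γ)
    {P P' : Type} (B : GpdBundle G Γ P) (B' : GpdBundle G Γ' P') (q : PBW φ B → P')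
    (hR : PullbackReal φ B P' q B')
    (F : FormsTheory) (𝔤 : Type) [AddCommGroup 𝔤] [Module ℝ 𝔤]
    (θ : F.Ω P ⊗[ℝ] 𝔤) (θ' : F.Ω P' ⊗[ℝ] 𝔤)
    (hθ' : pullT F q 𝔤 θ' = pullT F (pbσ φ B) 𝔤 θ) :
    partialT F 𝔤 B' θ' = 0 := by
  have hpe : ∀ w, B'.proj (q w) = φ.τ w.1.1 := hR.proj_eq
  set Qt := W2Qt φ B B' q hpe with hQtdef
  have hQ : pullT F (Qbeta B') 𝔤 θ' = pullT F (Qalpha B') 𝔤 θ' := by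
    apply pullT_inj F 𝔤 Qt (W2Qt_surj φ B B' q hpe hR.surj)
    have e1 : Qbeta B' ∘ Qt = q ∘ W2pr φ B := rfl
    have e2 : Qalpha B' ∘ Qt = q ∘ W2L φ B := funext fun x =>
      hR.gact_eq x.1.1 x.1.2 ((Qt x).2) x.2
    have e3 : pbσ φ B ∘ W2pr φ B = pbσ φ B ∘ W2L φ B := rfl
    calc pullT F Qt 𝔤 (pullT F (Qbeta B') 𝔤 θ')
        = pullT F (q ∘ W2pr φ B) 𝔤 θ' := by rw [← pullT_comp, e1]
      _ = pullT F (W2pr φ B) 𝔤 (pullT F (pbσ φ B) 𝔤 θ) := by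
          rw [pullT_comp F 𝔤 (W2pr φ B) q θ', hθ']
      _ = pullT F (pbσ φ B ∘ W2L φ B) 𝔤 θ := by rw [← pullT_comp, e3]
      _ = pullT F (W2L φ B) 𝔤 (pullT F q 𝔤 θ') := by
          rw [pullT_comp F 𝔤 (W2L φ B) (pbσ φ B) θ, hθ']
      _ = pullT F Qt 𝔤 (pullT F (Qalpha B') 𝔤 θ') := by
          rw [← pullT_comp F 𝔤 (W2L φ B) q θ', ← e2]
          exact pullT_comp F 𝔤 Qt (Qalpha B') θ'
  show (pullT F (Qbeta B') 𝔤 - pullT F (Qalpha B') 𝔤) θ' = 0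
  rw [LinearMap.sub_apply, hQ, sub_self]


set_option maxHeartbeats 1600000 in
/-- **Proposition 3.13 (pull-back connections).**
Let `θ` be a connection on the principal `G`-bundle `P` over `Γ ⇉ Γ₀` and let
`φ : Γ₀' ← Z → Γ₀` be a generalized homomorphism from `Γ'` to `Γ`, with pull-back
bundle `P' = (Z ×_{Γ₀} P)/Γ`.  Then: (1) there is a unique `θ' ∈ Ω¹(P') ⊗ 𝔤` with
`τ̃^* θ' = σ̃^* θ`; (2) `θ'` is a connection on `P'` over `Γ'` (the pull-back
connection `φ^* θ`); (3) the curvatures satisfy `τ̃^* Ω' = σ̃^* Ω`; (4) `φ^* θ` is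
flat whenever `θ` is flat; (5) for composable generalized homomorphisms `ψ, φ`,
one has `(φ ∘ ψ)^* θ = ψ^* (φ^* θ)` under the canonical identification `Φ` of the
two pull-back bundles. -/
theorem pullback_connection
    (G : Type) [Group G] (𝔤 : Type) [LieRing 𝔤] [LieAlgebra ℝ 𝔤]
    (Ad : G →* Module.End ℝ 𝔤)
    (Γ Γ' : Gpd) (φ : GenHom Γ' Γ)
    (P : Type) (B : GpdBundle G Γ P) (hB : B.toPrinBundle.IsPrincipal)
    (F : FormsTheory) (cd : ContractionData F 𝔤 P)
    -- a realisation of the pull-back bundle `φ^* P`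
    (P' : Type) (q : PBW φ B → P') (B' : GpdBundle G Γ' P')
    (hR : PullbackReal φ B P' q B')
    -- contraction data on `P'` and on `Z ×_{Γ₀} P`, compatible with `q` and `σ̃`
    (cd' : ContractionData F 𝔤 P') (cdW : ContractionData F 𝔤 (PBW φ B))
    (hcdq : ∀ X ω, F.pull q (cd'.i X ω) = cdW.i X (F.pull q ω))
    (hcdσ : ∀ X ω, F.pull (pbσ φ B) (cd.i X ω) = cdW.i X (F.pull (pbσ φ B) ω))
    -- a connection `θ` on `P` over `Γ`
    (θ : F.Ω P ⊗[ℝ] 𝔤) (hθ : IsPseudoConn G 𝔤 Ad F B cd θ)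
    (hconn : partialT F 𝔤 B θ = 0) :
    -- (1) existence and uniqueness of the pull-back `θ'`
    (∃! θ' : F.Ω P' ⊗[ℝ] 𝔤, pullT F q 𝔤 θ' = pullT F (pbσ φ B) 𝔤 θ) ∧
    -- (2) `θ'` is a connection on `P'` over `Γ'`
    (∀ θ' : F.Ω P' ⊗[ℝ] 𝔤, pullT F q 𝔤 θ' = pullT F (pbσ φ B) 𝔤 θ →
      IsPseudoConn G 𝔤 Ad F B' cd' θ' ∧ partialT F 𝔤 B' θ' = 0) ∧
    -- (3) `τ̃^* Ω' = σ̃^* Ω`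
    (∀ θ' : F.Ω P' ⊗[ℝ] 𝔤, pullT F q 𝔤 θ' = pullT F (pbσ φ B) 𝔤 θ →
      pullT F q 𝔤 (curv F 𝔤 θ') = pullT F (pbσ φ B) 𝔤 (curv F 𝔤 θ)) ∧
    -- (4) `φ^* θ` is flat if `θ` is flat
    (curv F 𝔤 θ = 0 → ∀ θ' : F.Ω P' ⊗[ℝ] 𝔤,
      pullT F q 𝔤 θ' = pullT F (pbσ φ B) 𝔤 θ → curv F 𝔤 θ' = 0) ∧
    -- (5) `(φ ∘ ψ)^* θ = ψ^* (φ^* θ)`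
    (∀ (Γ'' : Gpd) (ψ : GenHom Γ'' Γ') (χ : GenHom Γ'' Γ)
       (mk : CompW ψ φ → χ.Z) (hχ : CompReal ψ φ χ mk)
       (P'' : Type) (q₂ : PBW ψ B' → P'') (B'' : GpdBundle G Γ'' P'')
       (hR₂ : PullbackReal ψ B' P'' q₂ B'')
       (P₃ : Type) (q₃ : PBW χ B → P₃) (B₃ : GpdBundle G Γ'' P₃)
       (hR₃ : PullbackReal χ B P₃ q₃ B₃)
       -- the canonical identification of the two pull-back bundles
       (Φ : P'' → P₃), Function.Bijective Φ →
       (∀ (u : ψ.Z) (z : φ.Z) (p : P) (h₁ : ψ.σ u = φ.τ z)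
          (hzp : φ.σ z = B.proj p)
          (h₂ : ψ.σ u = B'.proj (q ⟨(z, p), hzp⟩))
          (h₃ : χ.σ (mk ⟨(u, z), h₁⟩) = B.proj p),
         Φ (q₂ ⟨(u, q ⟨(z, p), hzp⟩), h₂⟩) = q₃ ⟨(mk ⟨(u, z), h₁⟩, p), h₃⟩) →
       ∀ (θ' : F.Ω P' ⊗[ℝ] 𝔤) (θ'' : F.Ω P'' ⊗[ℝ] 𝔤) (θ₃ : F.Ω P₃ ⊗[ℝ] 𝔤),
         pullT F q 𝔤 θ' = pullT F (pbσ φ B) 𝔤 θ →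
         pullT F q₂ 𝔤 θ'' = pullT F (pbσ ψ B') 𝔤 θ' →
         pullT F q₃ 𝔤 θ₃ = pullT F (pbσ χ B) 𝔤 θ →
         pullT F Φ 𝔤 θ₃ = θ'') := by
  classical
  let s : P' → PBW φ B := Function.surjInv hR.surj
  have hqs : ∀ p', q (s p') = p' := fun p' => Function.surjInv_eq hR.surj p'
  have hβα : pullT F (Qbeta B) 𝔤 θ = pullT F (Qalpha B) 𝔤 θ := by
    have h := hconn
    unfold partialT at h
    rw [LinearMap.sub_apply] at h
    exact sub_eq_zero.mp h
  have horb : ∀ w : PBW φ B, orbRel B (pbσ φ B w) (pbσ φ B (s (q w))) := fun w =>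
    eqvGen_orbRel φ B ((hR.eq_iff w (s (q w))).mp (hqs (q w)).symm)
  choose γw hγw hew using horb
  let c : PBW φ B → QSp B := fun w => ⟨(γw w, pbσ φ B (s (q w))), hγw w⟩
  have key : pullT F q 𝔤 (pullT F (pbσ φ B ∘ s) 𝔤 θ) = pullT F (pbσ φ B) 𝔤 θ := by
    rw [← pullT_comp]
    calc pullT F ((pbσ φ B ∘ s) ∘ q) 𝔤 θ
        = pullT F c 𝔤 (pullT F (Qbeta B) 𝔤 θ) := by
          rw [← pullT_comp]; exact pullT_congr F 𝔤 (fun w => rfl) θ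
      _ = pullT F c 𝔤 (pullT F (Qalpha B) 𝔤 θ) := by rw [hβα]
      _ = pullT F (pbσ φ B) 𝔤 θ := by
          rw [← pullT_comp]; exact pullT_congr F 𝔤 (fun w => (hew w).symm) θ
  have hinjq := pullT_inj F 𝔤 q hR.surj
  have huniq : ∀ θ' : F.Ω P' ⊗[ℝ] 𝔤, pullT F q 𝔤 θ' = pullT F (pbσ φ B) 𝔤 θ →
      θ' = pullT F (pbσ φ B ∘ s) 𝔤 θ := fun θ' h => hinjq (h.trans key.symm)
  refine ⟨⟨pullT F (pbσ φ B ∘ s) 𝔤 θ, key, fun y hy => huniq y hy⟩, ?_, ?_, ?_, ?_⟩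
  · -- (2)
    intro θ' hθ'
    refine ⟨⟨?_, ?_, ?_⟩, ?_⟩
    · rw [huniq θ' hθ']
      exact pullT_grT F 𝔤 (pbσ φ B ∘ s) 1 hθ.1
    · intro X
      apply hinjq
      rw [pullT_rTensor_comm F 𝔤 q (cd'.i X) (cdW.i X) (hcdq X), hθ',
        ← pullT_rTensor_comm F 𝔤 (pbσ φ B) (cd.i X) (cdW.i X) (hcdσ X), hθ.2.1 X,
        pullT_one_tmul, pullT_one_tmul]
    · intro g
      apply hinjq
      let aW : PBW φ B → PBW φ B := fun w =>
        ⟨(w.1.1, B.act w.1.2 g), w.2.trans (B.proj_act w.1.2 g).symm⟩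
      calc pullT F q 𝔤 (pullT F (fun p' => B'.act p' g) 𝔤 θ')
          = pullT F ((fun p' => B'.act p' g) ∘ q) 𝔤 θ' := (pullT_comp F 𝔤 q _ θ').symm
        _ = pullT F (q ∘ aW) 𝔤 θ' := pullT_congr F 𝔤 (fun w => hR.act_eq w g) θ'
        _ = pullT F aW 𝔤 (pullT F q 𝔤 θ') := pullT_comp F 𝔤 aW q θ'
        _ = pullT F aW 𝔤 (pullT F (pbσ φ B) 𝔤 θ) := by rw [hθ']
        _ = pullT F (pbσ φ B ∘ aW) 𝔤 θ := (pullT_comp F 𝔤 aW (pbσ φ B) θ).symm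
        _ = pullT F ((fun p => B.act p g) ∘ pbσ φ B) 𝔤 θ := pullT_congr F 𝔤 (fun w => rfl) θ
        _ = pullT F (pbσ φ B) 𝔤 (pullT F (fun p => B.act p g) 𝔤 θ) :=
            pullT_comp F 𝔤 (pbσ φ B) _ θ
        _ = pullT F (pbσ φ B) 𝔤 (LinearMap.lTensor (F.Ω P) (Ad g⁻¹) θ) := by rw [hθ.2.2 g]
        _ = LinearMap.lTensor (F.Ω (PBW φ B)) (Ad g⁻¹) (pullT F (pbσ φ B) 𝔤 θ) :=
            pullT_lTensor F 𝔤 (pbσ φ B) (Ad g⁻¹) θ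
        _ = LinearMap.lTensor (F.Ω (PBW φ B)) (Ad g⁻¹) (pullT F q 𝔤 θ') := by rw [hθ']
        _ = pullT F q 𝔤 (LinearMap.lTensor (F.Ω P') (Ad g⁻¹) θ') :=
            (pullT_lTensor F 𝔤 q (Ad g⁻¹) θ').symm
    · exact partial_pullback φ B B' q hR F 𝔤 θ θ' hθ'
  · -- (3)
    intro θ' hθ'
    rw [pullT_curv, hθ', ← pullT_curv]
  · -- (4)
    intro hflat θ' hθ'
    apply hinjq
    rw [map_zero, pullT_curv, hθ', ← pullT_curv, hflat, map_zero]
  · -- (5)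
    intro Γ'' ψ χ mk hχ P'' q₂ B'' hR₂ P₃ q₃ B₃ hR₃ Φ hΦbij hΦ θ' θ'' θ₃ h1 h2 h3
    apply pullT_inj F 𝔤 q₂ hR₂.surj
    have hpf1 : ∀ x : PBW ψ B', ψ.σ x.1.1 = φ.τ (s x.1.2).1.1 := fun x =>
      x.2.trans ((congrArg B'.proj (hqs x.1.2)).symm.trans (hR.proj_eq (s x.1.2)))
    let Ψ : PBW ψ B' → PBW χ B := fun x =>
      ⟨(mk ⟨(x.1.1, (s x.1.2).1.1), hpf1 x⟩, (s x.1.2).1.2),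
        (hχ.σ_eq _).trans (s x.1.2).2⟩
    have hkey : ∀ x : PBW ψ B', Φ (q₂ x) = q₃ (Ψ x) := by
      intro x
      have hx : x = ⟨(x.1.1, q (s x.1.2)), x.2.trans (congrArg B'.proj (hqs x.1.2)).symm⟩ :=
        Subtype.ext (Prod.ext rfl (hqs x.1.2).symm)
      have h5 := hΦ x.1.1 (s x.1.2).1.1 (s x.1.2).1.2 (hpf1 x) (s x.1.2).2
        (x.2.trans (congrArg B'.proj (hqs x.1.2)).symm)
        ((hχ.σ_eq _).trans (s x.1.2).2)
      conv_lhs => rw [hx]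
      exact h5
    calc pullT F q₂ 𝔤 (pullT F Φ 𝔤 θ₃)
        = pullT F (Φ ∘ q₂) 𝔤 θ₃ := (pullT_comp F 𝔤 q₂ Φ θ₃).symm
      _ = pullT F (q₃ ∘ Ψ) 𝔤 θ₃ := pullT_congr F 𝔤 hkey θ₃
      _ = pullT F Ψ 𝔤 (pullT F q₃ 𝔤 θ₃) := pullT_comp F 𝔤 Ψ q₃ θ₃
      _ = pullT F Ψ 𝔤 (pullT F (pbσ χ B) 𝔤 θ) := by rw [h3]
      _ = pullT F (pbσ χ B ∘ Ψ) 𝔤 θ := (pullT_comp F 𝔤 Ψ (pbσ χ B) θ).symm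
      _ = pullT F (pbσ φ B ∘ (s ∘ pbσ ψ B')) 𝔤 θ := pullT_congr F 𝔤 (fun x => rfl) θ
      _ = pullT F (s ∘ pbσ ψ B') 𝔤 (pullT F (pbσ φ B) 𝔤 θ) := pullT_comp F 𝔤 _ _ θ
      _ = pullT F (s ∘ pbσ ψ B') 𝔤 (pullT F q 𝔤 θ') := by rw [h1]
      _ = pullT F (q ∘ (s ∘ pbσ ψ B')) 𝔤 θ' := (pullT_comp F 𝔤 _ q θ').symm
      _ = pullT F (pbσ ψ B') 𝔤 θ' := pullT_congr F 𝔤 (fun x => hqs _) θ'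
      _ = pullT F q₂ 𝔤 θ'' := h2.symm

end
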